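/- Let a ∈ ℝ with 0 ≤ a < 1. Then the restriction map H₁: 𝓑([−a/2, a/2]) → [−1, 1]^ℤ defined by H₁(f) = (f(n))_{n∈ℤ} is continuous, injective, and satisfies H₁ ∘ σ = σ ∘ H₁, where the first σ is the shift f ↦ f(·+1) on 𝓑([−a/2, a/2]) and the second σ is the shift (x_n)_{n∈ℤ} ↦ (x_{n+1})_{n∈ℤ} on [−1,1]^ℤ; consequently H₁ is an equivariant topological embedding of (𝓑([−a/2, a/2]), σ) into the full shift ([−1,1]^ℤ, σ). -/

import Mathlib

open MeasureTheory Set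
open scoped ENNReal NNReal

noncomputable section

/-- A bounded continuous function `f : ℝ → ℂ` is band-limited in `I` if its distributional
Fourier transform is supported in `I`, i.e. `⟨𝓕 f, g⟩ = ⟨f, 𝓕 g⟩ = 0` for every Schwartz
function `g` whose support is disjoint from `I`. -/
def BandLimitedIn (I : Set ℝ) (f : ℝ → ℂ) : Prop :=
  ∀ g : SchwartzMap ℝ ℂ, Disjoint (tsupport ⇑g) I →
    ∫ t : ℝ, f t * (FourierTransform.fourier (⇑g : ℝ → ℂ) : ℝ → ℂ) t = 0

/-- The Bernstein space `𝓑^ℂ(I)`. -/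
def BernsteinC (I : Set ℝ) : Set C(ℝ, ℂ) :=
  {f | (∀ t : ℝ, ‖f t‖ ≤ 1) ∧ BandLimitedIn I ⇑f}

/-- The real Bernstein space `𝓑(I)`. -/
def BernsteinR (I : Set ℝ) : Set C(ℝ, ℝ) :=
  {f | (∀ t : ℝ, |f t| ≤ 1) ∧ BandLimitedIn I (fun t => (f t : ℂ))}

/-- The shift `σ : g ↦ g(· + 1)`. -/
def shiftC : C(ℝ, ℂ) → C(ℝ, ℂ) := fun f => f.comp ⟨fun t => t + 1, by continuity⟩

def shiftR : C(ℝ, ℝ) → C(ℝ, ℝ) := fun f => f.comp ⟨fun t => t + 1, by continuity⟩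

/-- The metric `D(f,g) = Σ 2^{-n} ‖f-g‖_{L^∞([-n,n])}`. -/
def Dc (f g : C(ℝ, ℂ)) : ℝ :=
  ∑' n : ℕ, (1 / 2 : ℝ) ^ (n + 1) * ⨆ t : Icc (-(n + 1 : ℝ)) (n + 1 : ℝ), ‖f t.1 - g t.1‖

def Dr (f g : C(ℝ, ℝ)) : ℝ :=
  ∑' n : ℕ, (1 / 2 : ℝ) ^ (n + 1) * ⨆ t : Icc (-(n + 1 : ℝ)) (n + 1 : ℝ), |f t.1 - g t.1|

/-- Lebesgue covering dimension is at most `n`: every open cover admits an open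
refinement that still covers, of order at most `n + 1`. -/
def HasCovDimLE (X : Type*) [TopologicalSpace X] (n : ℕ) : Prop :=
  ∀ 𝒰 : Set (Set X), (∀ U ∈ 𝒰, IsOpen U) → ⋃₀ 𝒰 = Set.univ →
    ∃ 𝒱 : Set (Set X), (∀ V ∈ 𝒱, IsOpen V) ∧ ⋃₀ 𝒱 = Set.univ ∧
      (∀ V ∈ 𝒱, ∃ U ∈ 𝒰, V ⊆ U) ∧
      ∀ x : X, {V | V ∈ 𝒱 ∧ x ∈ V}.encard ≤ (n : ℕ∞) + 1

/-- Lebesgue covering dimension, valued in `ℕ∞`. -/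
def covDim (X : Type*) [TopologicalSpace X] : ℕ∞ :=
  ⨅ n ∈ {n : ℕ | HasCovDimLE X n}, (n : ℕ∞)

/-- `Widim_ε(X, d)`: the minimal covering dimension of a compact metrizable space `P`
admitting a continuous `ε`-embedding `f : X → P` with respect to `d`. -/
def Widim (X : Type u) [TopologicalSpace X] (d : X → X → ℝ) (ε : ℝ) : ℕ∞ :=
  sInf {k : ℕ∞ | ∃ (P : Type u) (tP : TopologicalSpace P),
    @CompactSpace P tP ∧ @TopologicalSpace.MetrizableSpace P tP ∧
    ∃ f : X → P, @Continuous X P _ tP f ∧ (∀ x y : X, f x = f y → d x y < ε) ∧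
      @covDim P tP = k}

/-- The dynamical metric `d_n(x,y) = max_{0 ≤ i ≤ n-1} d(T^i x, T^i y)`. -/
def dynDist {X : Type*} (T : X → X) (d : X → X → ℝ) (n : ℕ) (x y : X) : ℝ :=
  ⨆ i : Fin n, d (T^[(i : ℕ)] x) (T^[(i : ℕ)] y)

/-- Mean dimension `mdim(X,T) = lim_{ε→0} lim_{n→∞} Widim_ε(X, d_n)/n`; since
`Widim_ε(X, d_n)` is subadditive in `n` and monotone in `ε`, the iterated limit equals
`sup_{ε>0} inf_{n≥1} Widim_ε(X, d_n)/n`. -/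
def mdim {X : Type u} [TopologicalSpace X] (T : X → X) (d : X → X → ℝ) : ℝ≥0∞ :=
  ⨆ ε : {ε : ℝ // 0 < ε}, ⨅ n : ℕ+, (Widim X (dynDist T d n) ε.1 : ℝ≥0∞) / ((n : ℕ) : ℝ≥0∞)

/-- A system `(X, T)` is minimal if `X` has no nonempty proper closed `T`-invariant subset. -/
def IsMinimalSystem {X : Type*} [TopologicalSpace X] (T : X → X) : Prop :=
  ∀ Z : Set X, IsClosed Z → Z.Nonempty → T '' Z = Z → Z = Set.univ


/-- The full shift on `ℤ`-indexed sequences. -/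
def fullShift {α : Type*} : (ℤ → α) → (ℤ → α) := fun x n => x (n + 1)

/-- The restriction map `H₁(f) = (f(n))_{n∈ℤ}`. -/
def restrictToZ : C(ℝ, ℝ) → (ℤ → ℝ) := fun f n => f (n : ℝ)

namespace RestrictionAux

open Real Complex SchwartzMap Function
open scoped FourierTransform

lemma temperate_add_const (k : ℝ) : Function.HasTemperateGrowth (fun x : ℝ => x + k) := by
  apply Function.HasTemperateGrowth.of_fderiv (k := 1) (C := 1 + |k|)
  · have : (fderiv ℝ fun x : ℝ => x + k) = fun _ => ContinuousLinearMap.id ℝ ℝ := by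
      ext1 x
      rw [fderiv_add_const]
      simp [fderiv_id']
    rw [this]
    exact .const _
  · exact differentiable_id.add_const k
  · intro x
    simp only [Real.norm_eq_abs, pow_one]
    have h1 : |x + k| ≤ |x| + |k| := abs_add_le _ _
    nlinarith [abs_nonneg x, abs_nonneg k]

/-- Translation of a Schwartz function. -/
def trans (g : SchwartzMap ℝ ℂ) (k : ℝ) : SchwartzMap ℝ ℂ :=
  compCLM (𝕜 := ℝ) (temperate_add_const k)
    ⟨1, 1 + |k|, fun x => by
      simp only [Real.norm_eq_abs, pow_one]
      have h1 : |x| ≤ |x + k| + |k| := by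
        have := abs_add_le (x + k) (-k)
        simpa using this
      nlinarith [abs_nonneg (x + k), abs_nonneg k]⟩ g

@[simp] lemma trans_apply (g : SchwartzMap ℝ ℂ) (k x : ℝ) : trans g k x = g (x + k) := rfl

lemma fourier_translate (f : ℝ → ℂ) (k t : ℝ) :
    𝓕 (fun v => f (v + k)) t = Real.fourierChar (k * t) • 𝓕 f t := by
  have h := Fourier.fourierIntegral_comp_add_right (E := ℂ) Real.fourierChar volume f k
  have e1 : ∀ (u : ℝ → ℂ) (w : ℝ), 𝓕 u w = Fourier.fourierIntegral Real.fourierChar volume u w := by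
    intro u w
    rw [Real.fourier_real_eq, Fourier.fourierIntegral_def]
  rw [e1, e1]
  have := congrFun h t
  simpa [Function.comp_def] using this

lemma coe_add_int (x : ℝ) (n : ℤ) :
    ((x + n : ℝ) : AddCircle (1 : ℝ)) = ((x : ℝ) : AddCircle (1 : ℝ)) := by
  have h1 : ((n : ℝ) : AddCircle (1 : ℝ)) = 0 := by
    have : ((n : ℝ)) = n • (1 : ℝ) := by simp
    rw [this, AddCircle.coe_zsmul, AddCircle.coe_period, smul_zero]
  rw [AddCircle.coe_add, h1, add_zero]

lemma summable_bound (C R : ℝ) (hC : 0 ≤ C) (hR : 0 ≤ R) :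
    ∃ u : ℤ → ℝ, Summable u ∧ (∀ n, 0 ≤ u n) ∧
      ∀ (n : ℤ), ∀ x ∈ Icc (-R) R, C / (1 + (x + n) ^ 2) ≤ u n := by
  classical
  refine ⟨fun n => if |(n : ℝ)| ≤ 2 * R + 2 then C else 4 * C / (n : ℝ) ^ 2, ?_, ?_, ?_⟩
  · have hs : Summable (fun n : ℤ => 4 * C * (1 / (n : ℝ) ^ 2)) :=
      (Real.summable_one_div_int_pow.mpr one_lt_two).mul_left _
    apply Summable.of_norm_bounded_eventually (g := fun n : ℤ => 4 * C * (1 / (n : ℝ) ^ 2)) hs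
    have hfin : {n : ℤ | |(n : ℝ)| ≤ 2 * R + 2}.Finite := by
      have : {n : ℤ | |(n : ℝ)| ≤ 2 * R + 2} ⊆ Icc (-⌈2 * R + 2⌉) ⌈2 * R + 2⌉ := by
        intro n hn
        simp only [mem_setOf_eq, abs_le] at hn
        constructor
        · have : -(2 * R + 2) ≤ (n : ℝ) := hn.1
          have h2 : -(⌈2 * R + 2⌉ : ℝ) ≤ (n : ℝ) :=
            le_trans (by simpa using neg_le_neg (Int.le_ceil (2 * R + 2))) this
          exact_mod_cast h2
        · have : (n : ℝ) ≤ 2 * R + 2 := hn.2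
          have h2 : (n : ℝ) ≤ (⌈2 * R + 2⌉ : ℝ) := this.trans (Int.le_ceil _)
          exact_mod_cast h2
      exact (Set.finite_Icc _ _).subset this
    apply Filter.eventually_cofinite.mpr
    apply hfin.subset
    intro n hn
    simp only [mem_setOf_eq] at hn ⊢
    by_contra hcon
    apply hn
    rw [if_neg hcon]
    have hnn : ‖4 * C / ((n : ℝ)) ^ 2‖ = 4 * C / ((n : ℝ)) ^ 2 :=
      Real.norm_of_nonneg (by positivity)
    rw [hnn, mul_one_div]
  · intro n
    dsimp only
    split_ifs
    · exact hC
    · positivity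
  · intro n x hx
    simp only [mem_Icc] at hx
    have hpos : (0:ℝ) < 1 + (x + n) ^ 2 := by positivity
    dsimp only
    split_ifs with hcase
    · have h1 : (1:ℝ) ≤ 1 + (x + n) ^ 2 := by nlinarith [sq_nonneg (x + (n:ℝ))]
      have := div_le_div_of_nonneg_left hC one_pos h1
      simpa using this
    · -- |n| > 2R + 2
      push_neg at hcase
      have hxn : |x| ≤ R := abs_le.mpr hx
      have h1 : |(n : ℝ)| - R ≤ |x + (n:ℝ)| := by
        have := abs_add_le (x + n) (-x)
        simp only [add_neg_cancel_comm, abs_neg] at this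
        linarith
      have h2 : ((n:ℝ)) ^ 2 / 4 ≤ (x + n) ^ 2 := by
        have hhalf : |(n : ℝ)| / 2 ≤ |x + (n:ℝ)| := by
          have : R ≤ |(n:ℝ)| / 2 := by linarith
          linarith
        nlinarith [abs_nonneg (x + (n:ℝ)), abs_nonneg (n:ℝ), _root_.sq_abs (n:ℝ),
          _root_.sq_abs (x + (n:ℝ))]
      have habs : (0:ℝ) < |(n:ℝ)| := by linarith
      have hn0 : (0:ℝ) < (n:ℝ) ^ 2 := by nlinarith [_root_.sq_abs (n:ℝ)]
      calc C / (1 + (x + n) ^ 2) ≤ C / ((n:ℝ) ^ 2 / 4) := by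
            apply div_le_div_of_nonneg_left hC (by positivity) (by nlinarith)
        _ = 4 * C / (n:ℝ) ^ 2 := by field_simp

lemma integral_eq_zero_of_coeffs (F : ℝ → ℂ) (hFc : Continuous F) {C : ℝ}
    (hC : ∀ x : ℝ, ‖F x‖ * (1 + x ^ 2) ≤ C)
    (hcoef : ∀ k : ℤ, k ≠ 0 → ∫ t : ℝ, (Real.fourierChar (-(k * t)) : ℂ) * F t = 0)
    (hz : ∀ n : ℤ, F n = 0) : ∫ t : ℝ, F t = 0 := by
  haveI : Fact ((0:ℝ) < 1) := ⟨one_pos⟩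
  have hC0 : 0 ≤ C := le_trans (by positivity) (hC 0)
  have hFb : ∀ y : ℝ, ‖F y‖ ≤ C / (1 + y ^ 2) := by
    intro y
    rw [le_div_iff₀ (by positivity)]
    exact hC y
  set Φ : ℝ → ℂ := fun x => ∑' n : ℤ, F (x + n) with hΦ
  have hper : ∀ x : ℝ, Φ (x + 1) = Φ x := by
    intro x
    have h1 := (Equiv.addRight (1:ℤ)).tsum_eq (fun m : ℤ => F (x + m))
    calc Φ (x + 1) = ∑' n : ℤ, F (x + ((n + 1 : ℤ) : ℝ)) := by
          apply tsum_congr; intro n; congr 1; push_cast; ring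
      _ = Φ x := h1
  have hcont : Continuous Φ := by
    rw [continuous_iff_continuousAt]
    intro x₀
    obtain ⟨u, hu, -, hub⟩ := summable_bound C (|x₀| + 1) hC0 (by positivity)
    have hco : ContinuousOn Φ (Icc (-(|x₀| + 1)) (|x₀| + 1)) := by
      apply continuousOn_tsum
        (fun n => (hFc.comp (continuous_id.add continuous_const)).continuousOn) hu
      intro n x hx
      exact (hFb _).trans (hub n x hx)
    exact hco.continuousAt (Icc_mem_nhds
      (by nlinarith [neg_abs_le x₀, abs_nonneg x₀]) (by nlinarith [le_abs_self x₀, abs_nonneg x₀]))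
  set Φc : C(AddCircle (1:ℝ), ℂ) :=
    ⟨AddCircle.liftIco 1 0 Φ, AddCircle.liftIco_zero_continuous (by simpa using (hper 0).symm)
      hcont.continuousOn⟩ with hΦcdef
  have hΦccoe : ∀ x ∈ Ico (0:ℝ) 1, Φc ((x : ℝ) : AddCircle (1:ℝ)) = Φ x := by
    intro x hx
    show AddCircle.liftIco 1 0 Φ ((x : ℝ) : AddCircle (1:ℝ)) = Φ x
    exact AddCircle.liftIco_zero_coe_apply hx
  have hcoeff : ∀ k : ℤ, fourierCoeff (⇑Φc) k
      = ∫ t : ℝ, (fourier (-k) ((t : ℝ) : AddCircle (1:ℝ)) : ℂ) * F t := by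
    intro k
    set e : ℝ → ℂ := fun t => (fourier (-k) ((t : ℝ) : AddCircle (1:ℝ)) : ℂ) with he
    have hec : Continuous e :=
      (map_continuous (fourier (-k))).comp (AddCircle.continuous_mk' 1)
    have hen : ∀ t, ‖e t‖ = 1 := fun t => Circle.norm_coe _
    set G : ℝ → ℂ := fun t => e t * F t with hG
    have hGc : Continuous G := hec.mul hFc
    have hGb : ∀ y, ‖G y‖ ≤ C / (1 + y ^ 2) := by
      intro y
      calc ‖G y‖ = ‖e y‖ * ‖F y‖ := norm_mul _ _
        _ = ‖F y‖ := by rw [hen, one_mul]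
        _ ≤ C / (1 + y ^ 2) := hFb y
    have hGi : Integrable G := by
      have hint : Integrable (fun y : ℝ => C / (1 + y ^ 2)) := by
        simpa [div_eq_mul_inv] using integrable_inv_one_add_sq.const_mul C
      exact hint.mono' hGc.aestronglyMeasurable (ae_of_all _ hGb)
    have hper_e : ∀ (x : ℝ) (n : ℤ), e (x + n) = e x := by
      intro x n
      simp only [he]
      rw [coe_add_int]
    -- step 1 : coefficient as interval integral of Φ
    have h1 : fourierCoeff (⇑Φc) k = ∫ x in (0:ℝ)..1, e x * Φ x := by
      rw [fourierCoeff_eq_intervalIntegral (⇑Φc) k 0]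
      rw [zero_add]
      rw [one_div_one, one_smul]
      rw [intervalIntegral.integral_of_le zero_le_one,
        intervalIntegral.integral_of_le zero_le_one]
      rw [integral_Ioc_eq_integral_Ioo, integral_Ioc_eq_integral_Ioo]
      apply setIntegral_congr_fun measurableSet_Ioo
      intro x hx
      show (fourier (-k)) ((x : ℝ) : AddCircle (1:ℝ)) • Φc ((x : ℝ) : AddCircle (1:ℝ)) = e x * Φ x
      rw [hΦccoe x ⟨le_of_lt hx.1, hx.2⟩, smul_eq_mul]
    -- step 2 : expand Φ
    have h2 : ∀ x : ℝ, e x * Φ x = ∑' n : ℤ, G (x + n) := by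
      intro x
      rw [hΦ]
      simp only
      rw [← tsum_mul_left]
      apply tsum_congr
      intro n
      rw [hG]
      simp only
      rw [hper_e x n]
    -- step 3 : swap sum and integral
    obtain ⟨u, hu, hupos, hub⟩ := summable_bound C 1 hC0 zero_le_one
    have h3 : ∫ x in Ioo (0:ℝ) 1, (∑' n : ℤ, G (x + n))
        = ∑' n : ℤ, ∫ x in Ioo (0:ℝ) 1, G (x + n) := by
      apply integral_tsum
      · intro n
        exact ((hGc.comp (continuous_id.add continuous_const)).aestronglyMeasurable).restrict
      · have hle : ∀ n : ℤ, ∫⁻ x in Ioo (0:ℝ) 1, ‖G (x + n)‖₊ ≤ ENNReal.ofReal (u n) := by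
          intro n
          have hb : ∀ x ∈ Ioo (0:ℝ) 1, (‖G (x + n)‖₊ : ℝ≥0∞) ≤ ENNReal.ofReal (u n) := by
            intro x hx
            rw [show ((‖G (x + n)‖₊ : ℝ≥0∞)) = ENNReal.ofReal ‖G (x + n)‖ from (ENNReal.ofReal_eq_coe_nnreal (norm_nonneg _)).symm]
            apply ENNReal.ofReal_le_ofReal
            exact (hGb _).trans (hub n x ⟨by linarith [hx.1], by linarith [hx.2]⟩)
          calc ∫⁻ x in Ioo (0:ℝ) 1, ‖G (x + n)‖₊
              ≤ ∫⁻ _ in Ioo (0:ℝ) 1, ENNReal.ofReal (u n) :=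
                setLIntegral_mono (by measurability) hb
            _ = ENNReal.ofReal (u n) * volume (Ioo (0:ℝ) 1) := by
                rw [setLIntegral_const]
            _ = ENNReal.ofReal (u n) := by
                rw [Real.volume_Ioo]
                norm_num
        apply ne_top_of_le_ne_top (b := ENNReal.ofReal (∑' n, u n))
        · exact ENNReal.ofReal_ne_top
        · calc ∑' n : ℤ, ∫⁻ x in Ioo (0:ℝ) 1, ‖G (x + n)‖₊
              ≤ ∑' n : ℤ, ENNReal.ofReal (u n) := ENNReal.tsum_le_tsum hle
            _ = ENNReal.ofReal (∑' n, u n) := (ENNReal.ofReal_tsum_of_nonneg hupos hu).symm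
    -- step 4 : regather
    have h4 : HasSum (fun n : ℤ => ∫ x in (0:ℝ)..1, G (x + n)) (∫ x : ℝ, G x) :=
      hGi.hasSum_intervalIntegral_comp_add_int
    calc fourierCoeff (⇑Φc) k = ∫ x in (0:ℝ)..1, e x * Φ x := h1
      _ = ∫ x in Ioo (0:ℝ) 1, (∑' n : ℤ, G (x + n)) := by
          rw [intervalIntegral.integral_of_le zero_le_one, integral_Ioc_eq_integral_Ioo]
          exact setIntegral_congr_fun measurableSet_Ioo (fun x _ => h2 x)
      _ = ∑' n : ℤ, ∫ x in Ioo (0:ℝ) 1, G (x + n) := h3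
      _ = ∑' n : ℤ, ∫ x in (0:ℝ)..1, G (x + n) := by
          apply tsum_congr
          intro n
          rw [intervalIntegral.integral_of_le zero_le_one, integral_Ioc_eq_integral_Ioo]
      _ = ∫ x : ℝ, G x := h4.tsum_eq
  -- coefficients vanish for k ≠ 0
  have hk0 : ∀ k : ℤ, k ≠ 0 → fourierCoeff (⇑Φc) k = 0 := by
    intro k hk
    rw [hcoeff k, ← hcoef k hk]
    congr 1
    funext t
    congr 1
    rw [fourier_coe_apply, Real.fourierChar_apply]
    congr 1
    push_cast
    ring
  have hsummable : Summable (fourierCoeff (⇑Φc)) :=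
    summable_of_ne_finset_zero (s := {(0:ℤ)}) (fun k hk => hk0 k (by simpa using hk))
  have hseries := hasSum_fourier_series_of_summable hsummable
  have hsingle : HasSum (fun i : ℤ => fourierCoeff (⇑Φc) i • fourier (T := (1:ℝ)) i)
      ((fourierCoeff (⇑Φc) 0) • fourier (T := (1:ℝ)) 0) :=
    hasSum_single 0 (fun b hb => by rw [hk0 b hb, zero_smul])
  have hconst : Φc = (fourierCoeff (⇑Φc) 0) • fourier (T := (1:ℝ)) 0 := hseries.unique hsingle
  have hΦ00 : Φ 0 = 0 := by
    have hzz : ∀ n : ℤ, F ((0:ℝ) + (n:ℝ)) = 0 := fun n => by rw [zero_add]; exact hz n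
    calc Φ 0 = ∑' n : ℤ, F ((0:ℝ) + (n:ℝ)) := rfl
      _ = ∑' _ : ℤ, (0:ℂ) := tsum_congr hzz
      _ = 0 := tsum_zero
  have hc0 : fourierCoeff (⇑Φc) 0 = 0 := by
    have h5 := congrArg (fun f : C(AddCircle (1:ℝ), ℂ) => f (((0:ℝ)) : AddCircle (1:ℝ))) hconst
    simp only [ContinuousMap.smul_apply, smul_eq_mul] at h5
    rw [hΦccoe 0 (by norm_num), hΦ00, fourier_zero, mul_one] at h5
    exact h5.symm
  have h6 := hcoeff 0
  rw [hc0] at h6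
  calc ∫ t : ℝ, F t
      = ∫ t : ℝ, (fourier (-(0:ℤ)) ((t:ℝ) : AddCircle (1:ℝ)) : ℂ) * F t := by
        congr 1
        funext t
        rw [neg_zero, fourier_zero, one_mul]
    _ = 0 := h6.symm


lemma hasTemperateGrowth_of_compactSupport {φ : ℝ → ℝ} (h1 : ContDiff ℝ ((⊤ : ℕ∞) : WithTop ℕ∞) φ)
    (h2 : HasCompactSupport φ) : Function.HasTemperateGrowth φ := by
  refine ⟨h1, fun n => ?_⟩
  obtain ⟨Cn, hCn⟩ :=
    (h1.continuous_iteratedFDeriv (by exact_mod_cast le_top)).bounded_above_of_compact_support (h2.iteratedFDeriv n)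
  exact ⟨0, Cn, fun x => by simpa using hCn x⟩

/-- A smooth compactly supported real function, as a complex Schwartz function. -/
def ofCompactSupport (v : ℝ → ℝ) (h1 : ContDiff ℝ ((⊤ : ℕ∞) : WithTop ℕ∞) v) (h2 : HasCompactSupport v) :
    SchwartzMap ℝ ℂ where
  toFun := fun x => (v x : ℂ)
  smooth' := Complex.ofRealCLM.contDiff.comp h1
  decay' := by
    intro k n
    have hsm : ContDiff ℝ ((⊤ : ℕ∞) : WithTop ℕ∞) (fun x : ℝ => (v x : ℂ)) := Complex.ofRealCLM.contDiff.comp h1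
    have hcs : HasCompactSupport (fun x : ℝ => (v x : ℂ)) :=
      h2.comp_left (g := fun r : ℝ => (r : ℂ)) (by simp)
    have hct : Continuous fun x : ℝ => ‖x‖ ^ k * ‖iteratedFDeriv ℝ n (fun x : ℝ => (v x : ℂ)) x‖ :=
      (continuous_norm.pow k).mul (hsm.continuous_iteratedFDeriv (by exact_mod_cast le_top)).norm
    have hcs' : HasCompactSupport
        fun x : ℝ => ‖x‖ ^ k * ‖iteratedFDeriv ℝ n (fun x : ℝ => (v x : ℂ)) x‖ :=
      HasCompactSupport.mul_left ((hcs.iteratedFDeriv n).norm)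
    obtain ⟨C, hC⟩ := hct.bounded_above_of_compact_support hcs'
    exact ⟨C, fun x => by simpa using hC x⟩

@[simp] lemma ofCompactSupport_apply (v : ℝ → ℝ) (h1 : ContDiff ℝ ((⊤ : ℕ∞) : WithTop ℕ∞) v)
    (h2 : HasCompactSupport v) (x : ℝ) : ofCompactSupport v h1 h2 x = (v x : ℂ) := rfl

lemma bandlimited_eq_zero {a : ℝ} (ha0 : 0 ≤ a) (ha1 : a < 1) {h : ℝ → ℂ} {M : ℝ}
    (hc : Continuous h) (hb : ∀ t, ‖h t‖ ≤ M)
    (hbl : BandLimitedIn (Icc (-(a / 2)) (a / 2)) h)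
    (hz : ∀ n : ℤ, h n = 0) : ∀ t, h t = 0 := by
  have hM0 : 0 ≤ M := le_trans (norm_nonneg _) (hb 0)
  have hint : ∀ ψ : SchwartzMap ℝ ℂ, Integrable (fun t => h t * ψ t) := fun ψ =>
    ψ.integrable.bdd_mul hc.aestronglyMeasurable (ae_of_all _ hb)
  -- Step A : Schwartz functions supported in [-1/2, 1/2]
  have hsmall : ∀ g : SchwartzMap ℝ ℂ, tsupport ⇑g ⊆ Icc (-(1/2) : ℝ) (1/2) →
      ∫ t : ℝ, h t * 𝓕 ⇑g t = 0 := by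
    intro g hsupp
    set w : SchwartzMap ℝ ℂ := fourierTransformCLE ℝ (SchwartzMap ℝ ℂ) g with hw
    have hwcoe : ∀ t, w t = 𝓕 ⇑g t := fun t => rfl
    set F : ℝ → ℂ := fun t => h t * w t with hF
    obtain ⟨C0, -, hC0⟩ := w.decay 0 0
    obtain ⟨C2, -, hC2⟩ := w.decay 2 0
    have hwb : ∀ x : ℝ, ‖w x‖ * (1 + x ^ 2) ≤ C0 + C2 := by
      intro x
      have h0 := hC0 x
      have h2 := hC2 x
      rw [norm_iteratedFDeriv_zero] at h0 h2
      simp only [pow_zero, one_mul, Real.norm_eq_abs] at h0 h2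
      nlinarith [norm_nonneg (w x), _root_.sq_abs x]
    have hbound : ∀ x : ℝ, ‖F x‖ * (1 + x ^ 2) ≤ M * (C0 + C2) := by
      intro x
      have hFx : ‖F x‖ ≤ M * ‖w x‖ := by
        rw [hF]
        simp only
        rw [norm_mul]
        exact mul_le_mul_of_nonneg_right (hb x) (norm_nonneg _)
      nlinarith [norm_nonneg (w x), norm_nonneg (F x), hwb x, sq_nonneg x]
    have hFrw : ∀ t, h t * 𝓕 ⇑g t = F t := fun t => by
      show h t * 𝓕 ⇑g t = h t * w t
      rw [hwcoe t]
    calc ∫ t : ℝ, h t * 𝓕 ⇑g t = ∫ t : ℝ, F t := by simp_rw [hFrw]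
      _ = 0 := by
        apply integral_eq_zero_of_coeffs F (hc.mul w.continuous) hbound
        · intro k hk
          have hdisj : Disjoint (tsupport ⇑(trans g (-(k:ℝ)))) (Icc (-(a/2)) (a/2)) := by
            have hsub : tsupport ⇑(trans g (-(k:ℝ)))
                ⊆ {x : ℝ | x + -(k:ℝ) ∈ Icc (-(1/2):ℝ) (1/2)} := by
              apply closure_minimal
              · intro x hx
                have hx' : g (x + -(k:ℝ)) ≠ 0 := hx
                exact hsupp (subset_tsupport _ hx')
              · exact isClosed_Icc.preimage (continuous_id.add continuous_const)
            rw [Set.disjoint_left]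
            intro x hx hx2
            have h1 := hsub hx
            simp only [mem_setOf_eq, mem_Icc] at h1 hx2
            rcases lt_or_gt_of_ne hk with hk' | hk'
            · have hk1 : (k:ℝ) ≤ -1 := by
                have : k ≤ -1 := by omega
                exact_mod_cast this
              linarith [h1.2, hx2.1]
            · have hk1 : (1:ℝ) ≤ (k:ℝ) := by
                have : 1 ≤ k := by omega
                exact_mod_cast this
              linarith [h1.1, hx2.2]
          have h0 := hbl (trans g (-(k:ℝ))) hdisj
          have htr : ∀ t : ℝ, 𝓕 (⇑(trans g (-(k:ℝ)))) t
              = Real.fourierChar (-(k:ℝ) * t) • 𝓕 ⇑g t := by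
            intro t
            have hco : ⇑(trans g (-(k:ℝ))) = fun v => g (v + -(k:ℝ)) := rfl
            rw [hco, fourier_translate]
          calc ∫ t : ℝ, (Real.fourierChar (-((k:ℝ) * t)) : ℂ) * F t
              = ∫ t : ℝ, h t * 𝓕 (⇑(trans g (-(k:ℝ)))) t := by
                congr 1
                funext t
                rw [htr t, Circle.smul_def, hF]
                simp only [hwcoe]
                rw [neg_mul, smul_eq_mul]
                ring
            _ = 0 := h0
        · intro n
          rw [hF]
          simp only
          rw [hz n, zero_mul]
  -- Step B : all Schwartz functions
  have hall : ∀ g : SchwartzMap ℝ ℂ, ∫ t : ℝ, h t * 𝓕 ⇑g t = 0 := by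
    intro g
    have h14 : (0:ℝ) < (1 + a) / 4 := by linarith
    have h12 : (1 + a) / 4 < 1 / 2 := by linarith
    set χ : ContDiffBump (0:ℝ) := ⟨(1+a)/4, 1/2, h14, h12⟩ with hχ
    have hχtemp : Function.HasTemperateGrowth (fun x : ℝ => χ x) :=
      hasTemperateGrowth_of_compactSupport (χ.contDiff (n := (⊤ : ℕ∞))) χ.hasCompactSupport
    set g₁ : SchwartzMap ℝ ℂ :=
      bilinLeftCLM ((ContinuousLinearMap.lsmul ℝ ℝ : ℝ →L[ℝ] ℂ →L[ℝ] ℂ).flip) hχtemp g with hg₁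
    have hg₁coe : ∀ x, g₁ x = χ x • g x := fun x => rfl
    set g₂ : SchwartzMap ℝ ℂ := g - g₁ with hg₂
    have hg₂coe : ∀ x, g₂ x = g x - χ x • g x := fun x => by
      rw [hg₂]
      simp only [SchwartzMap.sub_apply]
      rw [hg₁coe]
    have hs1 : tsupport ⇑g₁ ⊆ Icc (-(1/2):ℝ) (1/2) := by
      have hmono : tsupport ⇑g₁ ⊆ tsupport (fun x => χ x) := by
        apply closure_mono
        intro x hx
        simp only [Function.mem_support] at hx ⊢
        intro hχ0
        apply hx
        rw [hg₁coe, hχ0, zero_smul]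
      refine hmono.trans ?_
      rw [χ.tsupport_eq]
      intro x hx
      rw [Metric.mem_closedBall, Real.dist_eq, sub_zero] at hx
      exact abs_le.mp hx
    have hs2 : Disjoint (tsupport ⇑g₂) (Icc (-(a/2)) (a/2)) := by
      have hsub : tsupport ⇑g₂ ⊆ {x : ℝ | (1+a)/4 ≤ |x|} := by
        apply closure_minimal
        · intro x hx
          simp only [Function.mem_support] at hx
          by_contra hcon
          simp only [mem_setOf_eq, not_le] at hcon
          apply hx
          rw [hg₂coe]
          have hχ1 : χ x = 1 := χ.one_of_mem_closedBall
            (by rw [Metric.mem_closedBall, Real.dist_eq, sub_zero]; exact le_of_lt hcon)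
          rw [hχ1, one_smul, sub_self]
        · have hset : {x : ℝ | (1+a)/4 ≤ |x|} = (fun x : ℝ => |x|) ⁻¹' (Ici ((1+a)/4)) := rfl
          rw [hset]
          exact isClosed_Ici.preimage _root_.continuous_abs
      rw [Set.disjoint_left]
      intro x hx hx2
      have h1 := hsub hx
      simp only [mem_setOf_eq] at h1
      have h2 : |x| ≤ a/2 := abs_le.mpr (by simpa using hx2)
      linarith
    have e1 : ∫ t : ℝ, h t * 𝓕 ⇑g₁ t = 0 := hsmall g₁ hs1
    have e2 : ∫ t : ℝ, h t * 𝓕 ⇑g₂ t = 0 := hbl g₂ hs2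
    have hgsum : g = g₁ + g₂ := by rw [hg₂]; abel
    have hadd : ∀ t, 𝓕 ⇑g t = 𝓕 ⇑g₁ t + 𝓕 ⇑g₂ t := by
      intro t
      have hmap : fourierTransformCLE ℝ (SchwartzMap ℝ ℂ) g
          = fourierTransformCLE ℝ (SchwartzMap ℝ ℂ) g₁ + fourierTransformCLE ℝ (SchwartzMap ℝ ℂ) g₂ := by
        rw [hgsum, map_add]
      calc 𝓕 ⇑g t = (fourierTransformCLE ℝ (SchwartzMap ℝ ℂ) g) t := rfl
        _ = (fourierTransformCLE ℝ (SchwartzMap ℝ ℂ) g₁) t + (fourierTransformCLE ℝ (SchwartzMap ℝ ℂ) g₂) t := by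
            rw [hmap]; rfl
        _ = 𝓕 ⇑g₁ t + 𝓕 ⇑g₂ t := rfl
    have hi1 : Integrable (fun t => h t * 𝓕 ⇑g₁ t) := hint (fourierTransformCLE ℝ (SchwartzMap ℝ ℂ) g₁)
    have hi2 : Integrable (fun t => h t * 𝓕 ⇑g₂ t) := hint (fourierTransformCLE ℝ (SchwartzMap ℝ ℂ) g₂)
    calc ∫ t : ℝ, h t * 𝓕 ⇑g t
        = ∫ t : ℝ, (h t * 𝓕 ⇑g₁ t + h t * 𝓕 ⇑g₂ t) := by
          congr 1
          funext t
          rw [hadd t]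
          ring
      _ = (∫ t : ℝ, h t * 𝓕 ⇑g₁ t) + ∫ t : ℝ, h t * 𝓕 ⇑g₂ t := integral_add hi1 hi2
      _ = 0 := by rw [e1, e2, add_zero]
  -- Step C : test against arbitrary Schwartz functions
  have hall' : ∀ ψ : SchwartzMap ℝ ℂ, ∫ t : ℝ, h t * ψ t = 0 := by
    intro ψ
    have h1 := hall ((fourierTransformCLE ℝ (SchwartzMap ℝ ℂ)).symm ψ)
    have h2 : ∀ t, 𝓕 ⇑((fourierTransformCLE ℝ (SchwartzMap ℝ ℂ)).symm ψ) t = ψ t := by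
      intro t
      have h3 := (fourierTransformCLE ℝ (SchwartzMap ℝ ℂ)).apply_symm_apply ψ
      calc 𝓕 ⇑((fourierTransformCLE ℝ (SchwartzMap ℝ ℂ)).symm ψ) t
          = (fourierTransformCLE ℝ (SchwartzMap ℝ ℂ) ((fourierTransformCLE ℝ (SchwartzMap ℝ ℂ)).symm ψ)) t := rfl
        _ = ψ t := by rw [h3]
    calc ∫ t : ℝ, h t * ψ t = ∫ t : ℝ, h t * 𝓕 ⇑((fourierTransformCLE ℝ (SchwartzMap ℝ ℂ)).symm ψ) t := by
          congr 1
          funext t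
          rw [h2 t]
      _ = 0 := h1
  -- Step D : conclude h = 0
  have hae : ∀ᵐ t : ℝ, h t = 0 := by
    apply ae_eq_zero_of_integral_contDiff_smul_eq_zero hc.locallyIntegrable
    intro v hv1 hv2
    have h1 := hall' (ofCompactSupport v hv1 hv2)
    calc ∫ t : ℝ, v t • h t = ∫ t : ℝ, h t * (ofCompactSupport v hv1 hv2) t := by
          congr 1
          funext t
          rw [ofCompactSupport_apply]
          rw [Complex.real_smul]
          ring
      _ = 0 := h1
  have heq : h = fun _ => 0 := (hc.ae_eq_iff_eq volume continuous_const).mp hae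
  intro t
  exact congrFun heq t


end RestrictionAux

/-- For `0 ≤ a < 1`, the restriction map `H₁ : f ↦ (f(n))_{n∈ℤ}` maps `𝓑([-a/2, a/2])`
into `[-1,1]^ℤ`, is continuous, injective on `𝓑([-a/2, a/2])` and intertwines the shift on
`𝓑([-a/2, a/2])` with the full shift; hence it is an equivariant topological embedding of
`(𝓑([-a/2, a/2]), σ)` into the full shift `([-1,1]^ℤ, σ)`. -/
theorem restriction_embedding_Bernstein (a : ℝ) (ha0 : 0 ≤ a) (ha1 : a < 1) :
    (∀ f ∈ BernsteinR (Icc (-(a / 2)) (a / 2)), ∀ n : ℤ,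
      restrictToZ f n ∈ Icc (-1 : ℝ) 1) ∧
    ContinuousOn restrictToZ (BernsteinR (Icc (-(a / 2)) (a / 2))) ∧
    Set.InjOn restrictToZ (BernsteinR (Icc (-(a / 2)) (a / 2))) ∧
    (∀ f : C(ℝ, ℝ), restrictToZ (shiftR f) = fullShift (restrictToZ f)) := by
  refine ⟨?_, ?_, ?_, ?_⟩
  · intro f hf n
    have h1 := abs_le.mp (hf.1 (n : ℝ))
    exact ⟨h1.1, h1.2⟩
  · apply Continuous.continuousOn
    apply continuous_pi
    intro n
    exact continuous_eval_const _
  · intro f hf g hg hfg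
    have hcont : Continuous fun t : ℝ => ((f t : ℂ) - (g t : ℂ)) :=
      (Complex.continuous_ofReal.comp f.continuous).sub
        (Complex.continuous_ofReal.comp g.continuous)
    have hb : ∀ t : ℝ, ‖(f t : ℂ) - (g t : ℂ)‖ ≤ 2 := by
      intro t
      calc ‖(f t : ℂ) - (g t : ℂ)‖ ≤ ‖(f t : ℂ)‖ + ‖(g t : ℂ)‖ := norm_sub_le _ _
        _ ≤ 1 + 1 := add_le_add (by simpa using hf.1 t) (by simpa using hg.1 t)
        _ = 2 := by norm_num
    have hbl : BandLimitedIn (Icc (-(a / 2)) (a / 2))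
        (fun t : ℝ => ((f t : ℂ) - (g t : ℂ))) := by
      intro ψ hψ
      have h1 := hf.2 ψ hψ
      have h2 := hg.2 ψ hψ
      have hi1 : Integrable (fun t : ℝ => (f t : ℂ) * (FourierTransform.fourier (⇑ψ : ℝ → ℂ) : ℝ → ℂ) t) :=
        (SchwartzMap.fourierTransformCLE ℝ (SchwartzMap ℝ ℂ) ψ).integrable.bdd_mul
          (Complex.continuous_ofReal.comp f.continuous).aestronglyMeasurable
          (c := 1) (ae_of_all _ fun t => by simpa using hf.1 t)
      have hi2 : Integrable (fun t : ℝ => (g t : ℂ) * (FourierTransform.fourier (⇑ψ : ℝ → ℂ) : ℝ → ℂ) t) :=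
        (SchwartzMap.fourierTransformCLE ℝ (SchwartzMap ℝ ℂ) ψ).integrable.bdd_mul
          (Complex.continuous_ofReal.comp g.continuous).aestronglyMeasurable
          (c := 1) (ae_of_all _ fun t => by simpa using hg.1 t)
      calc ∫ t : ℝ, ((f t : ℂ) - (g t : ℂ)) * (FourierTransform.fourier (⇑ψ : ℝ → ℂ) : ℝ → ℂ) t
          = ∫ t : ℝ, ((f t : ℂ) * (FourierTransform.fourier (⇑ψ : ℝ → ℂ) : ℝ → ℂ) t
              - (g t : ℂ) * (FourierTransform.fourier (⇑ψ : ℝ → ℂ) : ℝ → ℂ) t) := by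
            congr 1
            funext t
            ring
        _ = (∫ t : ℝ, (f t : ℂ) * (FourierTransform.fourier (⇑ψ : ℝ → ℂ) : ℝ → ℂ) t)
              - ∫ t : ℝ, (g t : ℂ) * (FourierTransform.fourier (⇑ψ : ℝ → ℂ) : ℝ → ℂ) t := integral_sub hi1 hi2
        _ = 0 := by rw [h1, h2, sub_zero]
    have hzero : ∀ n : ℤ, ((f (n:ℝ) : ℂ) - (g (n:ℝ) : ℂ)) = 0 := by
      intro n
      have heq : f (n:ℝ) = g (n:ℝ) := congrFun hfg n
      rw [heq, sub_self]
    have hall := RestrictionAux.bandlimited_eq_zero ha0 ha1 hcont hb hbl hzero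
    ext t
    have ht := hall t
    have : (f t : ℂ) = (g t : ℂ) := sub_eq_zero.mp ht
    exact_mod_cast this
  · intro f
    funext n
    show f ((n : ℝ) + 1) = f (((n + 1 : ℤ) : ℝ))
    congr 1
    push_cast
    ring


end
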